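/- Let r ≥ 2 and n ≥ 4 be integers. Then every r-multiplicity antichain F ⊆ 2^[n] satisfies |S(F)| ≤ n − 3. Equivalently, g(n, r) ≤ n − 3. -/
import Mathlib


theorem stmt_4 (n r : ℕ) (hr : 2 ≤ r) (hn : 4 ≤ n)
    (F : Finset (Finset (Fin n)))
    (hanti : ∀ A ∈ F, ∀ B ∈ F, A ≠ B → ¬ A ⊆ B)
    (hmult : ∀ t ∈ F.image Finset.card,
      r ≤ (F.filter (fun A => A.card = t)).card) :
    (F.image Finset.card).card ≤ n - 3 := by
  set S := F.image Finset.card with hS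
  -- auxiliary: if all sets of size t coincide with a fixed X, then t is not an occurring size
  have aux : ∀ t : ℕ, ∀ X : Finset (Fin n),
      (∀ A ∈ F, A.card = t → A = X) → t ∉ S := by
    intro t X hX ht
    have h1 := hmult t ht
    have h2 : F.filter (fun A => A.card = t) ⊆ {X} := by
      intro A hA
      simp only [Finset.mem_filter] at hA
      simp [hX A hA.1 hA.2]
    have h3 := Finset.card_le_card h2
    simp only [Finset.card_singleton] at h3
    omega
  have h0S : 0 ∉ S := aux 0 ∅ (fun A _ h => Finset.card_eq_zero.mp h)
  have hnS : n ∉ S := by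
    refine aux n Finset.univ (fun A _ h => ?_)
    exact Finset.eq_univ_of_card A (by simp [h])
  have htop : ∀ t ∈ S, t ≤ n := by
    intro t ht
    obtain ⟨A, _, hA⟩ := Finset.mem_image.mp ht
    have := Finset.card_le_univ A
    simp at this
    omega
  -- helper to extract two distinct sets of a given size
  have two : ∀ t ∈ S, ∃ A ∈ F, ∃ B ∈ F, A ≠ B ∧ A.card = t ∧ B.card = t := by
    intro t ht
    have hf : 1 < (F.filter (fun A => A.card = t)).card :=
      lt_of_lt_of_le (by omega) (hmult t ht)
    obtain ⟨A, hA, B, hB, hAB⟩ := Finset.one_lt_card.mp hf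
    simp only [Finset.mem_filter] at hA hB
    exact ⟨A, hA.1, B, hB.1, hAB, hA.2, hB.2⟩
  by_cases h1 : 1 ∈ S
  · -- two singletons {a}, {b}; every other set avoids a and b
    obtain ⟨A, hAF, B, hBF, hAB, hAc, hBc⟩ := two 1 h1
    obtain ⟨a, rfl⟩ := Finset.card_eq_one.mp hAc
    obtain ⟨b, rfl⟩ := Finset.card_eq_one.mp hBc
    have hab : a ≠ b := fun h => hAB (by rw [h])
    have havoid : ∀ C ∈ F, C ≠ {a} → C ≠ {b} → C ⊆ Finset.univ \ {a, b} := by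
      intro C hC hCa hCb e he
      have ha : ¬ ({a} : Finset (Fin n)) ⊆ C := hanti _ hAF C hC (fun h => hCa h.symm)
      have hb : ¬ ({b} : Finset (Fin n)) ⊆ C := hanti _ hBF C hC (fun h => hCb h.symm)
      rw [Finset.singleton_subset_iff] at ha hb
      simp only [Finset.mem_sdiff, Finset.mem_univ, Finset.mem_insert, Finset.mem_singleton,
        true_and]
      rintro (rfl | rfl) <;> [exact ha he; exact hb he]
    have hcard2 : ({a, b} : Finset (Fin n)).card = 2 := by
      rw [Finset.card_insert_of_notMem (by simp [hab]), Finset.card_singleton]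
    have hgcard : (Finset.univ \ ({a, b} : Finset (Fin n))).card = n - 2 := by
      rw [Finset.card_sdiff_of_subset (Finset.subset_univ _), hcard2]
      simp
    have hne : ∀ C : Finset (Fin n), 2 ≤ C.card → C ≠ {a} ∧ C ≠ {b} := by
      intro C hC
      constructor <;> rintro rfl <;> simp at hC
    have hn2S : n - 2 ∉ S := by
      refine aux (n - 2) (Finset.univ \ {a, b}) (fun C hC hCc => ?_)
      have h2 : 2 ≤ C.card := by omega
      obtain ⟨ha, hb⟩ := hne C h2
      exact Finset.eq_of_subset_of_card_le (havoid C hC ha hb) (by omega)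
    have hn1S : n - 1 ∉ S := by
      refine aux (n - 1) ∅ (fun C hC hCc => ?_)
      have h2 : 2 ≤ C.card := by omega
      obtain ⟨ha, hb⟩ := hne C h2
      have := Finset.card_le_card (havoid C hC ha hb)
      omega
    have hsub : S ⊆ Finset.Icc 1 (n - 3) := by
      intro t ht
      rw [Finset.mem_Icc]
      have h0 : t ≠ 0 := fun h => h0S (h ▸ ht)
      have hn' : t ≠ n := fun h => hnS (h ▸ ht)
      have h2 : t ≠ n - 2 := fun h => hn2S (h ▸ ht)
      have h3 : t ≠ n - 1 := fun h => hn1S (h ▸ ht)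
      have := htop t ht
      omega
    have := Finset.card_le_card hsub
    rw [Nat.card_Icc] at this
    omega
  · by_cases hn1 : n - 1 ∈ S
    · -- two (n-1)-sets; complements are singletons {x}, {y}; every other set contains x and y
      obtain ⟨A, hAF, B, hBF, hAB, hAc, hBc⟩ := two (n - 1) hn1
      have hAcc : Aᶜ.card = 1 := by rw [Finset.card_compl, hAc]; simp; omega
      have hBcc : Bᶜ.card = 1 := by rw [Finset.card_compl, hBc]; simp; omega
      obtain ⟨x, hx⟩ := Finset.card_eq_one.mp hAcc
      obtain ⟨y, hy⟩ := Finset.card_eq_one.mp hBcc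
      have hxy : x ≠ y := by
        rintro rfl
        exact hAB (compl_injective (hx.trans hy.symm))
      have hmem : ∀ C ∈ F, C ≠ A → C ≠ B → {x, y} ⊆ C := by
        intro C hC hCA hCB
        have ha : ¬ C ⊆ A := hanti C hC A hAF hCA
        have hb : ¬ C ⊆ B := hanti C hC B hBF hCB
        obtain ⟨e, heC, heA⟩ := Finset.not_subset.mp ha
        obtain ⟨f, hfC, hfB⟩ := Finset.not_subset.mp hb
        have hex : e = x := by
          have : e ∈ Aᶜ := Finset.mem_compl.mpr heA
          rw [hx] at this; simpa using this
        have hfy : f = y := by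
          have : f ∈ Bᶜ := Finset.mem_compl.mpr hfB
          rw [hy] at this; simpa using this
        intro z hz
        simp only [Finset.mem_insert, Finset.mem_singleton] at hz
        rcases hz with rfl | rfl
        · exact hex ▸ heC
        · exact hfy ▸ hfC
      have hcard2 : ({x, y} : Finset (Fin n)).card = 2 := by
        rw [Finset.card_insert_of_notMem (by simp [hxy]), Finset.card_singleton]
      have h2S : 2 ∉ S := by
        refine aux 2 {x, y} (fun C hC hCc => ?_)
        have hCA : C ≠ A := by rintro rfl; omega
        have hCB : C ≠ B := by rintro rfl; omega
        exact (Finset.eq_of_subset_of_card_le (hmem C hC hCA hCB) (by omega)).symm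
      have hsub : S ⊆ Finset.Icc 3 (n - 1) := by
        intro t ht
        rw [Finset.mem_Icc]
        have h0 : t ≠ 0 := fun h => h0S (h ▸ ht)
        have h1' : t ≠ 1 := fun h => h1 (h ▸ ht)
        have h2' : t ≠ 2 := fun h => h2S (h ▸ ht)
        have hn' : t ≠ n := fun h => hnS (h ▸ ht)
        have := htop t ht
        omega
      have := Finset.card_le_card hsub
      rw [Nat.card_Icc] at this
      omega
    · have hsub : S ⊆ Finset.Icc 2 (n - 2) := by
        intro t ht
        rw [Finset.mem_Icc]
        have h0 : t ≠ 0 := fun h => h0S (h ▸ ht)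
        have h1' : t ≠ 1 := fun h => h1 (h ▸ ht)
        have hn1' : t ≠ n - 1 := fun h => hn1 (h ▸ ht)
        have hn' : t ≠ n := fun h => hnS (h ▸ ht)
        have := htop t ht
        omega
      have := Finset.card_le_card hsub
      rw [Nat.card_Icc] at this
      omega
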